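/- arXiv:1107.1794 — 3 statements merged into one kernel-verified Lean document; each statement's English description precedes it below -/
import Mathlib

section
/- For any two 2-copulas C₁ and C₂, their fold product A(x,y) = ∫₀¹ ∂₂C₁(x,t)·∂₁C₂(t,y) dt is again a 2-copula, i.e., A has uniform margins (A(x,1)=x, A(1,y)=y, A(x,0)=A(0,y)=0) and is 2-increasing. -/
open MeasureTheory ProbabilityTheory Set Filter

/-! ### Auxiliary material -/

/-- Clamp a real number to `[0,1]`. -/
noncomputable def clmp (t : ℝ) : ℝ := min (max t 0) 1

lemma clmp_mem (t : ℝ) : clmp t ∈ Icc (0:ℝ) 1 :=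
  ⟨le_min (le_max_right _ _) zero_le_one, min_le_right _ _⟩

lemma clmp_mono : Monotone clmp := fun _ _ h =>
  min_le_min (max_le_max h le_rfl) le_rfl

lemma clmp_eq {t : ℝ} (ht : t ∈ Icc (0:ℝ) 1) : clmp t = t := by
  simp [clmp, max_eq_left ht.1, min_eq_left ht.2]

lemma clmp_sub_le {s u : ℝ} (h : s ≤ u) : clmp u - clmp s ≤ u - s := by
  unfold clmp
  rcases le_total u 0 with h1 | h1 <;> rcases le_total s 0 with h2 | h2 <;>
    rcases le_total u 1 with h3 | h3 <;> rcases le_total s 1 with h4 | h4 <;>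
    simp [min_def, max_def] <;> split_ifs <;> linarith

/-- A function that is monotone and whose difference to the identity is monotone is
`1`-Lipschitz, hence continuous. -/
lemma cont_of_mono {f : ℝ → ℝ} (hf : Monotone f) (hg : Monotone fun t => t - f t) :
    Continuous f := by
  have : LipschitzWith 1 f := by
    apply LipschitzWith.of_dist_le_mul
    intro s u
    rw [Real.dist_eq, Real.dist_eq, NNReal.coe_one, one_mul]
    rcases le_total s u with h | h
    · have h1 : f s ≤ f u := hf h
      have h2 : u - f u ≥ s - f s := hg h
      rw [abs_of_nonpos (by linarith), abs_of_nonpos (by linarith)]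
      linarith
    · have h1 : f u ≤ f s := hf h
      have h2 : s - f s ≥ u - f u := hg h
      rw [abs_of_nonneg (by linarith), abs_of_nonneg (by linarith)]
      linarith
  exact this.continuous

lemma stieltjes_measure_Ioc {f : ℝ → ℝ} (hf : Monotone f) (hc : Continuous f) (a b : ℝ) :
    hf.stieltjesFunction.measure (Ioc a b) = ENNReal.ofReal (f b - f a) := by
  rw [StieltjesFunction.measure_Ioc]
  have : ∀ x, hf.stieltjesFunction x = f x := by
    intro x
    rw [hf.stieltjesFunction_eq]
    exact rightLim_eq_of_tendsto (h := nhdsGT_neBot x)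
      (hc.continuousAt.continuousWithinAt)
  rw [this, this]

lemma stieltjes_le_volume {f : ℝ → ℝ} (hf : Monotone f) (hg : Monotone fun t => t - f t) :
    hf.stieltjesFunction.measure ≤ volume := by
  have hcf : Continuous f := cont_of_mono hf hg
  have hcg : Continuous fun t => t - f t := continuous_id.sub hcf
  haveI : IsLocallyFiniteMeasure
      (hf.stieltjesFunction.measure + hg.stieltjesFunction.measure) := by
    constructor
    intro x
    obtain ⟨s, hs, hfin1⟩ := hf.stieltjesFunction.measure.finiteAt_nhds x
    obtain ⟨t, ht, hfin2⟩ := hg.stieltjesFunction.measure.finiteAt_nhds x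
    refine ⟨s ∩ t, inter_mem hs ht, ?_⟩
    rw [Measure.add_apply]
    exact ENNReal.add_lt_top.2 ⟨lt_of_le_of_lt (measure_mono inter_subset_left) hfin1,
      lt_of_le_of_lt (measure_mono inter_subset_right) hfin2⟩
  have key : hf.stieltjesFunction.measure + hg.stieltjesFunction.measure = volume := by
    apply MeasureTheory.Measure.ext_of_Ioc
    intro a b hab
    rw [Measure.add_apply, stieltjes_measure_Ioc hf hcf, stieltjes_measure_Ioc hg hcg,
      Real.volume_Ioc, ← ENNReal.ofReal_add (by linarith [hf hab.le])
        (by have h := hg hab.le; simp only at h; linarith)]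
    congr 1; ring
  calc hf.stieltjesFunction.measure
      ≤ hf.stieltjesFunction.measure + hg.stieltjesFunction.measure :=
        Measure.le_add_right le_rfl
    _ = volume := key

lemma ae_deriv_bounds {f : ℝ → ℝ} (hf : Monotone f) (hg : Monotone fun t => t - f t) :
    ∀ᵐ t, DifferentiableAt ℝ f t ∧ 0 ≤ deriv f t ∧ deriv f t ≤ 1 := by
  filter_upwards [hf.ae_hasDerivAt, hg.ae_hasDerivAt] with t h1 h2
  refine ⟨h1.differentiableAt, ?_, ?_⟩
  · rw [h1.deriv]; exact ENNReal.toReal_nonneg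
  · have h3 : HasDerivAt (fun t => t - f t) (1 - deriv f t) t := by
      simpa [Pi.sub_def] using (hasDerivAt_id t).sub (h1.differentiableAt.hasDerivAt)
    have h5 := h2.unique h3
    have h4 : (0:ℝ) ≤ 1 - deriv f t := h5 ▸ ENNReal.toReal_nonneg
    linarith

/-- Fundamental theorem of calculus for monotone `1`-Lipschitz functions. -/
lemma ftc_mono {f : ℝ → ℝ} (hf : Monotone f) (hg : Monotone fun t => t - f t) :
    ∫ t in Ioc (0:ℝ) 1, deriv f t = f 1 - f 0 := by
  have hcf : Continuous f := cont_of_mono hf hg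
  set μ := hf.stieltjesFunction.measure with hμ
  have hle : μ ≤ volume := stieltjes_le_volume hf hg
  have hac : μ ≪ volume := hle.absolutelyContinuous
  have hd : ∀ᵐ t, deriv f t = (μ.rnDeriv volume t).toReal := by
    filter_upwards [hf.ae_hasDerivAt] with t ht using ht.deriv
  calc ∫ t in Ioc (0:ℝ) 1, deriv f t
      = ∫ t in Ioc (0:ℝ) 1, (μ.rnDeriv volume t).toReal :=
        integral_congr_ae (ae_restrict_of_ae hd)
    _ = (∫⁻ t in Ioc (0:ℝ) 1, μ.rnDeriv volume t).toReal := by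
        rw [integral_toReal ((μ.measurable_rnDeriv volume).aemeasurable)
          (ae_restrict_of_ae (μ.rnDeriv_lt_top volume))]
    _ = (μ (Ioc (0:ℝ) 1)).toReal := by
        rw [Measure.setLIntegral_rnDeriv hac]
    _ = f 1 - f 0 := by
        rw [hμ, stieltjes_measure_Ioc hf hcf,
          ENNReal.toReal_ofReal (by linarith [hf (zero_le_one (α := ℝ))])]

lemma deriv_sub_eq {f g : ℝ → ℝ} {d e t : ℝ} (h1 : HasDerivAt (fun u => f u - g u) d t)
    (h2 : HasDerivAt g e t) : deriv f t - deriv g t = d := by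
  have h3 : HasDerivAt f (d + e) t := by simpa [Pi.add_def] using h1.add h2
  rw [h3.deriv, h2.deriv]; ring

/-- A 2-copula on `[0,1]²`. -/
def IsCopula (C : ℝ → ℝ → ℝ) : Prop :=
  (∀ x ∈ Icc (0:ℝ) 1, C x 0 = 0) ∧
  (∀ y ∈ Icc (0:ℝ) 1, C 0 y = 0) ∧
  (∀ x ∈ Icc (0:ℝ) 1, C x 1 = x) ∧
  (∀ y ∈ Icc (0:ℝ) 1, C 1 y = y) ∧
  (∀ x₁ x₂ y₁ y₂ : ℝ, x₁ ∈ Icc (0:ℝ) 1 → x₂ ∈ Icc (0:ℝ) 1 → y₁ ∈ Icc (0:ℝ) 1 →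
    y₂ ∈ Icc (0:ℝ) 1 → x₁ ≤ x₂ → y₁ ≤ y₂ →
    0 ≤ C x₂ y₂ - C x₂ y₁ - C x₁ y₂ + C x₁ y₁)

/-- The fold product of two copulas:
`(C₁ ∗ C₂)(x,y) = ∫₀¹ ∂₂C₁(x,t) ∂₁C₂(t,y) dt`. -/
noncomputable def foldProd (C₁ C₂ : ℝ → ℝ → ℝ) : ℝ → ℝ → ℝ := fun x y =>
  ∫ t in (0:ℝ)..1, deriv (fun s => C₁ x s) t * deriv (fun s => C₂ s y) t

section CopulaLemmas

variable {C : ℝ → ℝ → ℝ}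

lemma copula_mono_diff (hC : IsCopula C) {x₁ x₂ : ℝ} (h1 : x₁ ∈ Icc (0:ℝ) 1)
    (h2 : x₂ ∈ Icc (0:ℝ) 1) (h12 : x₁ ≤ x₂) :
    Monotone fun t => C x₂ (clmp t) - C x₁ (clmp t) := by
  intro s u hsu
  have h := hC.2.2.2.2 x₁ x₂ (clmp s) (clmp u) h1 h2 (clmp_mem s) (clmp_mem u) h12
    (clmp_mono hsu)
  simp only
  linarith

lemma copula_mono_diff' (hC : IsCopula C) {y₁ y₂ : ℝ} (h1 : y₁ ∈ Icc (0:ℝ) 1)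
    (h2 : y₂ ∈ Icc (0:ℝ) 1) (h12 : y₁ ≤ y₂) :
    Monotone fun t => C (clmp t) y₂ - C (clmp t) y₁ := by
  intro s u hsu
  have h := hC.2.2.2.2 (clmp s) (clmp u) y₁ y₂ (clmp_mem s) (clmp_mem u) h1 h2
    (clmp_mono hsu) h12
  simp only
  linarith

lemma copula_sec_mono (hC : IsCopula C) {x : ℝ} (hx : x ∈ Icc (0:ℝ) 1) :
    Monotone fun t => C x (clmp t) := by
  intro s u hsu
  have h := copula_mono_diff hC ⟨le_rfl, zero_le_one⟩ hx hx.1 hsu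
  simp only [hC.2.1 _ (clmp_mem _)] at h
  simpa using h

lemma copula_sec_mono' (hC : IsCopula C) {y : ℝ} (hy : y ∈ Icc (0:ℝ) 1) :
    Monotone fun t => C (clmp t) y := by
  intro s u hsu
  have h := copula_mono_diff' hC ⟨le_rfl, zero_le_one⟩ hy hy.1 hsu
  simp only [hC.1 _ (clmp_mem _)] at h
  simpa using h

lemma copula_sec_sub (hC : IsCopula C) {x : ℝ} (hx : x ∈ Icc (0:ℝ) 1) :
    Monotone fun t => t - C x (clmp t) := by
  intro s u hsu
  have h := copula_mono_diff hC hx ⟨hx.1.trans hx.2, le_rfl⟩ hx.2 hsu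
  simp only [hC.2.2.2.1 _ (clmp_mem _)] at h
  have h2 := clmp_sub_le hsu
  simp only
  linarith

lemma copula_sec_sub' (hC : IsCopula C) {y : ℝ} (hy : y ∈ Icc (0:ℝ) 1) :
    Monotone fun t => t - C (clmp t) y := by
  intro s u hsu
  have h := copula_mono_diff' hC hy ⟨hy.1.trans hy.2, le_rfl⟩ hy.2 hsu
  simp only [hC.2.2.1 _ (clmp_mem _)] at h
  have h2 := clmp_sub_le hsu
  simp only
  linarith

end CopulaLemmas

/-- The fold product of two 2-copulas is again a 2-copula. -/
theorem foldProd_isCopula (C₁ C₂ : ℝ → ℝ → ℝ) (h₁ : IsCopula C₁) (h₂ : IsCopula C₂) :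
    IsCopula (foldProd C₁ C₂) := by
  -- a.e. every point of `Ioc 0 1` lies in the open interval
  have hm : ∀ᵐ t ∂(volume.restrict (Ioc (0:ℝ) 1)), t ∈ Ioo (0:ℝ) 1 := by
    have h2 : ∀ᵐ (t : ℝ), t ≠ 1 := by
      have hs : {a : ℝ | ¬ a ≠ 1} = {1} := by ext a; simp
      rw [ae_iff, hs]
      exact measure_singleton 1
    filter_upwards [ae_restrict_mem measurableSet_Ioc, ae_restrict_of_ae h2] with t ht ht1
    exact ⟨ht.1, lt_of_le_of_ne ht.2 ht1⟩
  -- on the open interval, derivatives of sections agree with derivatives of clamped sections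
  have hde₁ : ∀ (x : ℝ) {t : ℝ}, t ∈ Ioo (0:ℝ) 1 →
      deriv (fun s => C₁ x s) t = deriv (fun s => C₁ x (clmp s)) t := by
    intro x t ht
    apply Filter.EventuallyEq.deriv_eq
    filter_upwards [Ioo_mem_nhds ht.1 ht.2] with s hs
    rw [clmp_eq ⟨hs.1.le, hs.2.le⟩]
  have hde₂ : ∀ (y : ℝ) {t : ℝ}, t ∈ Ioo (0:ℝ) 1 →
      deriv (fun s => C₂ s y) t = deriv (fun s => C₂ (clmp s) y) t := by
    intro y t ht
    apply Filter.EventuallyEq.deriv_eq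
    filter_upwards [Ioo_mem_nhds ht.1 ht.2] with s hs
    rw [clmp_eq ⟨hs.1.le, hs.2.le⟩]
  -- derivative of the boundary sections
  have hone : ∀ {t : ℝ}, t ∈ Ioo (0:ℝ) 1 → deriv (fun s => C₂ s 1) t = 1 := by
    intro t ht
    have h : deriv (fun s => C₂ s 1) t = deriv (id : ℝ → ℝ) t := by
      apply Filter.EventuallyEq.deriv_eq
      filter_upwards [Ioo_mem_nhds ht.1 ht.2] with s hs
      exact h₂.2.2.1 s ⟨hs.1.le, hs.2.le⟩
    rw [h, deriv_id]
  have hone' : ∀ {t : ℝ}, t ∈ Ioo (0:ℝ) 1 → deriv (fun s => C₁ 1 s) t = 1 := by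
    intro t ht
    have h : deriv (fun s => C₁ 1 s) t = deriv (id : ℝ → ℝ) t := by
      apply Filter.EventuallyEq.deriv_eq
      filter_upwards [Ioo_mem_nhds ht.1 ht.2] with s hs
      exact h₁.2.2.2.1 s ⟨hs.1.le, hs.2.le⟩
    rw [h, deriv_id]
  have hzero : ∀ {t : ℝ}, t ∈ Ioo (0:ℝ) 1 → deriv (fun s => C₂ s 0) t = 0 := by
    intro t ht
    have h : deriv (fun s => C₂ s 0) t = deriv (fun _ : ℝ => (0:ℝ)) t := by
      apply Filter.EventuallyEq.deriv_eq
      filter_upwards [Ioo_mem_nhds ht.1 ht.2] with s hs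
      exact h₂.1 s ⟨hs.1.le, hs.2.le⟩
    rw [h, deriv_const]
  have hzero' : ∀ {t : ℝ}, t ∈ Ioo (0:ℝ) 1 → deriv (fun s => C₁ 0 s) t = 0 := by
    intro t ht
    have h : deriv (fun s => C₁ 0 s) t = deriv (fun _ : ℝ => (0:ℝ)) t := by
      apply Filter.EventuallyEq.deriv_eq
      filter_upwards [Ioo_mem_nhds ht.1 ht.2] with s hs
      exact h₁.2.1 s ⟨hs.1.le, hs.2.le⟩
    rw [h, deriv_const]
  -- integrability of the integrand
  have hint : ∀ (x y : ℝ), x ∈ Icc (0:ℝ) 1 → y ∈ Icc (0:ℝ) 1 →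
      IntegrableOn (fun t => deriv (fun s => C₁ x s) t * deriv (fun s => C₂ s y) t)
        (Ioc (0:ℝ) 1) := by
    intro x y hx hy
    have hb1 := ae_deriv_bounds (copula_sec_mono h₁ hx) (copula_sec_sub h₁ hx)
    have hb2 := ae_deriv_bounds (copula_sec_mono' h₂ hy) (copula_sec_sub' h₂ hy)
    apply Integrable.mono' (integrable_const (1:ℝ))
    · exact ((measurable_deriv _).mul (measurable_deriv _)).aestronglyMeasurable
    · filter_upwards [hm, ae_restrict_of_ae hb1, ae_restrict_of_ae hb2] with t ht hc1 hc2
      rw [norm_mul, Real.norm_eq_abs, Real.norm_eq_abs, hde₁ x ht, hde₂ y ht]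
      have ha1 : |deriv (fun s => C₁ x (clmp s)) t| ≤ 1 :=
        abs_le.2 ⟨by linarith [hc1.2.1], hc1.2.2⟩
      have ha2 : |deriv (fun s => C₂ (clmp s) y) t| ≤ 1 :=
        abs_le.2 ⟨by linarith [hc2.2.1], hc2.2.2⟩
      exact mul_le_one₀ ha1 (abs_nonneg _) ha2
  refine ⟨?_, ?_, ?_, ?_, ?_⟩
  · -- C x 0 = 0
    intro x hx
    rw [foldProd, intervalIntegral.integral_of_le zero_le_one]
    apply integral_eq_zero_of_ae
    filter_upwards [hm] with t ht
    simp only [hzero ht, mul_zero, Pi.zero_apply]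
  · -- C 0 y = 0
    intro y hy
    rw [foldProd, intervalIntegral.integral_of_le zero_le_one]
    apply integral_eq_zero_of_ae
    filter_upwards [hm] with t ht
    simp only [hzero' ht, zero_mul, Pi.zero_apply]
  · -- C x 1 = x
    intro x hx
    rw [foldProd, intervalIntegral.integral_of_le zero_le_one]
    have hcongr : ∫ t in Ioc (0:ℝ) 1, deriv (fun s => C₁ x s) t * deriv (fun s => C₂ s 1) t
        = ∫ t in Ioc (0:ℝ) 1, deriv (fun s => C₁ x (clmp s)) t := by
      apply integral_congr_ae
      filter_upwards [hm] with t ht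
      rw [hone ht, mul_one, hde₁ x ht]
    rw [hcongr, ftc_mono (copula_sec_mono h₁ hx) (copula_sec_sub h₁ hx),
      clmp_eq (right_mem_Icc.2 zero_le_one), clmp_eq (left_mem_Icc.2 zero_le_one),
      h₁.2.2.1 x hx, h₁.1 x hx, sub_zero]
  · -- C 1 y = y
    intro y hy
    rw [foldProd, intervalIntegral.integral_of_le zero_le_one]
    have hcongr : ∫ t in Ioc (0:ℝ) 1, deriv (fun s => C₁ 1 s) t * deriv (fun s => C₂ s y) t
        = ∫ t in Ioc (0:ℝ) 1, deriv (fun s => C₂ (clmp s) y) t := by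
      apply integral_congr_ae
      filter_upwards [hm] with t ht
      rw [hone' ht, one_mul, hde₂ y ht]
    rw [hcongr, ftc_mono (copula_sec_mono' h₂ hy) (copula_sec_sub' h₂ hy),
      clmp_eq (right_mem_Icc.2 zero_le_one), clmp_eq (left_mem_Icc.2 zero_le_one),
      h₂.2.2.2.1 y hy, h₂.2.1 y hy, sub_zero]
  · -- 2-increasing
    intro x₁ x₂ y₁ y₂ hx₁ hx₂ hy₁ hy₂ hx12 hy12
    have I22 := hint x₂ y₂ hx₂ hy₂
    have I21 := hint x₂ y₁ hx₂ hy₁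
    have I12 := hint x₁ y₂ hx₁ hy₂
    have I11 := hint x₁ y₁ hx₁ hy₁
    have key : foldProd C₁ C₂ x₂ y₂ - foldProd C₁ C₂ x₂ y₁
        - foldProd C₁ C₂ x₁ y₂ + foldProd C₁ C₂ x₁ y₁
        = ∫ t in Ioc (0:ℝ) 1,
            (deriv (fun s => C₁ x₂ s) t - deriv (fun s => C₁ x₁ s) t) *
            (deriv (fun s => C₂ s y₂) t - deriv (fun s => C₂ s y₁) t) := by
      simp only [foldProd, intervalIntegral.integral_of_le (zero_le_one (α := ℝ))]
      rw [show ∀ a b c d : ℝ, a - b - c + d = (a - b) - (c - d) from fun _ _ _ _ => by ring]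
      rw [← integral_sub I22 I21, ← integral_sub I12 I11]
      exact (integral_sub (I22.sub I21) (I12.sub I11)).symm.trans
        (integral_congr_ae (Eventually.of_forall fun t => by simp only [Pi.sub_apply]; ring))
    rw [key]
    apply integral_nonneg_of_ae
    filter_upwards [hm,
      ae_restrict_of_ae (copula_sec_mono h₁ hx₁).ae_hasDerivAt,
      ae_restrict_of_ae (copula_mono_diff h₁ hx₁ hx₂ hx12).ae_hasDerivAt,
      ae_restrict_of_ae (copula_sec_mono' h₂ hy₁).ae_hasDerivAt,
      ae_restrict_of_ae (copula_mono_diff' h₂ hy₁ hy₂ hy12).ae_hasDerivAt]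
      with t ht hf1 hfd hg1 hgd
    have e1 : 0 ≤ deriv (fun s => C₁ x₂ s) t - deriv (fun s => C₁ x₁ s) t := by
      rw [hde₁ x₂ ht, hde₁ x₁ ht, deriv_sub_eq hfd hf1]
      exact ENNReal.toReal_nonneg
    have e2 : 0 ≤ deriv (fun s => C₂ s y₂) t - deriv (fun s => C₂ s y₁) t := by
      rw [hde₂ y₂ ht, hde₂ y₁ ht, deriv_sub_eq hgd hg1]
      exact ENNReal.toReal_nonneg
    exact mul_nonneg e1 e2
end

section
/- For a stationary Markov chain, the maximal correlation coefficient satisfies ρₙ ≤ (ρ₁)ⁿ, where ρₙ = ρ(σ(X₀), σ(Xₙ)) is the maximal coefficient of correlation between X₀ and Xₙ. -/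
open MeasureTheory ProbabilityTheory Set Filter

/-- The n-fold composition (n-step transition kernel) of a kernel. -/
noncomputable def kpow {α : Type*} [MeasurableSpace α] (κ : Kernel α α) : ℕ → Kernel α α
  | 0 => Kernel.id
  | n + 1 => κ ∘ₖ kpow κ n

/-- The uniform (Lebesgue) probability measure on `[0,1]`. -/
noncomputable def unif01 : Measure ℝ := volume.restrict (Icc (0:ℝ) 1)

/-- `κ` is the transition kernel of the stationary Markov chain generated by the copula `C`
(with uniform marginals), i.e. `κ x [0,y] = ∂₁C(x,y)` for a.e. `x`. -/
def IsCopulaKernel (C : ℝ → ℝ → ℝ) (κ : Kernel ℝ ℝ) : Prop :=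
  ∀ y ∈ Icc (0:ℝ) 1, ∀ᵐ x ∂unif01, κ x (Iic y) = ENNReal.ofReal (deriv (fun s => C s y) x)

/-- Maximal correlation coefficient between the two coordinate σ-algebras,
for a joint law `μ` on a product space: the supremum of `∫ f(x) g(y) dμ`
over mean-zero functions with second moment at most one. -/
noncomputable def maxCorrFS {α : Type*} [MeasurableSpace α] (μ : Measure (α × α)) : ℝ :=
  sSup {r : ℝ | ∃ f g : α → ℝ,
    Measurable f ∧ Measurable g ∧
    MemLp (fun p => f p.1) 2 μ ∧ MemLp (fun p => g p.2) 2 μ ∧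
    (∫ p, f p.1 ∂μ) = 0 ∧ (∫ p, g p.2 ∂μ) = 0 ∧
    (∫ p, (f p.1) ^ 2 ∂μ) ≤ 1 ∧ (∫ p, (g p.2) ^ 2 ∂μ) ≤ 1 ∧
    r = ∫ p, f p.1 * g p.2 ∂μ}

set_option linter.unusedVariables false

section Aux
variable {α : Type*} [MeasurableSpace α]

instance kpow.instIsMarkovKernel (κ : Kernel α α) [IsMarkovKernel κ] (n : ℕ) :
    IsMarkovKernel (kpow κ n) := by
  induction n with
  | zero => rw [kpow]; infer_instance
  | succ n ih => rw [kpow]; infer_instance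

lemma bind_kpow (π : Measure α) (κ : Kernel α α) [IsMarkovKernel κ]
    (hinv : π.bind κ = π) (n : ℕ) : π.bind (kpow κ n) = π := by
  induction n with
  | zero =>
      rw [kpow]
      have : ⇑(Kernel.id : Kernel α α) = Measure.dirac := funext Kernel.id_apply
      rw [this, Measure.bind_dirac]
  | succ n ih =>
      rw [kpow]
      exact Kernel.Invariant.comp hinv ih

lemma snd_compProd' (π : Measure α) [SFinite π] (η : Kernel α α) [IsSFiniteKernel η] :
    (π ⊗ₘ η).snd = π.bind η := by
  ext s hs
  rw [Measure.snd_apply hs, Measure.compProd_apply (measurable_snd hs),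
    Measure.bind_apply hs (Kernel.measurable η).aemeasurable]
  rfl

/-- Jensen / Cauchy-Schwarz for a probability measure. -/
lemma sq_integral_le {β : Type*} [MeasurableSpace β] (ν : Measure β) [IsProbabilityMeasure ν]
    {g : β → ℝ} (hg : MemLp g 2 ν) : (∫ y, g y ∂ν) ^ 2 ≤ ∫ y, g y ^ 2 ∂ν := by
  set m := ∫ y, g y ∂ν with hm
  have hgi : Integrable g ν := hg.integrable (by norm_num)
  have hg2 : Integrable (fun y => g y ^ 2) ν := hg.integrable_sq
  have h : 0 ≤ ∫ y, (g y - m) ^ 2 ∂ν := integral_nonneg fun y => sq_nonneg _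
  have expand : ∫ y, (g y - m) ^ 2 ∂ν = ∫ y, g y ^ 2 ∂ν - (2 * m) * m + m ^ 2 := by
    have h1 : ∀ y, (g y - m) ^ 2 = g y ^ 2 - (2 * m) * g y + m ^ 2 := fun y => by ring
    simp_rw [h1]
    have hA : Integrable (fun y => g y ^ 2 - 2 * m * g y) ν := hg2.sub (hgi.const_mul _)
    rw [integral_add hA (integrable_const _), integral_sub hg2 (hgi.const_mul _),
      integral_const_mul, integral_const]
    simp [← hm]
  nlinarith [h, expand]

/-- AM-GM bound on the correlation integral. -/
lemma integral_mul_le_one {β : Type*} [MeasurableSpace β] (μ : Measure β)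
    [IsProbabilityMeasure μ] {F G : β → ℝ} (hF : MemLp F 2 μ) (hG : MemLp G 2 μ)
    (hF1 : ∫ x, F x ^ 2 ∂μ ≤ 1) (hG1 : ∫ x, G x ^ 2 ∂μ ≤ 1) :
    ∫ x, F x * G x ∂μ ≤ 1 := by
  have hI2 : Integrable (fun x => (F x ^ 2 + G x ^ 2) / 2) μ :=
    (hF.integrable_sq.add hG.integrable_sq).div_const 2
  have hFG : Integrable (fun x => F x * G x) μ := by
    refine Integrable.mono' hI2
      (hF.aestronglyMeasurable.mul hG.aestronglyMeasurable) ?_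
    filter_upwards with x
    rw [Real.norm_eq_abs, abs_mul]
    nlinarith [sq_nonneg (|F x| - |G x|), sq_abs (F x), sq_abs (G x)]
  have hmono : ∫ x, F x * G x ∂μ ≤ ∫ x, (F x ^ 2 + G x ^ 2) / 2 ∂μ := by
    refine integral_mono hFG hI2 fun x => ?_
    nlinarith [sq_nonneg (F x - G x)]
  have : ∫ x, (F x ^ 2 + G x ^ 2) / 2 ∂μ
      = (∫ x, F x ^ 2 ∂μ + ∫ x, G x ^ 2 ∂μ) / 2 := by
    rw [integral_div, integral_add hF.integrable_sq hG.integrable_sq]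
  linarith [hmono, this.symm.le]

end Aux

section Transfer
variable {α : Type*} [MeasurableSpace α]

lemma integral_fst'' {μ : Measure (α × α)} [SFinite μ] {φ : α → ℝ}
    (hφ : AEStronglyMeasurable φ μ.fst) :
    ∫ p, φ p.1 ∂μ = ∫ x, φ x ∂μ.fst :=
  (integral_map measurable_fst.aemeasurable hφ).symm

lemma integral_snd'' {μ : Measure (α × α)} [SFinite μ] {φ : α → ℝ}
    (hφ : AEStronglyMeasurable φ μ.snd) :
    ∫ p, φ p.2 ∂μ = ∫ x, φ x ∂μ.snd :=
  (integral_map measurable_snd.aemeasurable hφ).symm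

lemma memLp_fst_iff {μ : Measure (α × α)} [SFinite μ] {φ : α → ℝ}
    (hφ : AEStronglyMeasurable φ μ.fst) :
    MemLp (fun p => φ p.1) 2 μ ↔ MemLp φ 2 μ.fst :=
  (memLp_map_measure_iff hφ measurable_fst.aemeasurable).symm

lemma memLp_snd_iff {μ : Measure (α × α)} [SFinite μ] {φ : α → ℝ}
    (hφ : AEStronglyMeasurable φ μ.snd) :
    MemLp (fun p => φ p.2) 2 μ ↔ MemLp φ 2 μ.snd :=
  (memLp_map_measure_iff hφ measurable_snd.aemeasurable).symm

lemma integrable_snd_iff {μ : Measure (α × α)} [SFinite μ] {φ : α → ℝ}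
    (hφ : AEStronglyMeasurable φ μ.snd) :
    Integrable (fun p => φ p.2) μ ↔ Integrable φ μ.snd :=
  (integrable_map_measure hφ measurable_snd.aemeasurable).symm

end Transfer

section ProdInt
variable {α : Type*} [MeasurableSpace α]

lemma integrable_mul2 {β : Type*} [MeasurableSpace β] {μ : Measure β}
    {F G : β → ℝ} (hF : MemLp F 2 μ) (hG : MemLp G 2 μ) :
    Integrable (fun x => F x * G x) μ := by
  have hI2 : Integrable (fun x => (F x ^ 2 + G x ^ 2) / 2) μ :=
    (hF.integrable_sq.add hG.integrable_sq).div_const 2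
  refine Integrable.mono' hI2
    (hF.aestronglyMeasurable.mul hG.aestronglyMeasurable) ?_
  filter_upwards with x
  rw [Real.norm_eq_abs, abs_mul]
  nlinarith [sq_nonneg (|F x| - |G x|), sq_abs (F x), sq_abs (G x)]

variable (π : Measure α) [IsProbabilityMeasure π] (η : Kernel α α) [IsMarkovKernel η]

lemma memLp_fst_compProd {f : α → ℝ} (hf : MemLp f 2 π) :
    MemLp  (fun p => f p.1) 2 (π ⊗ₘ η) := by
  refine (memLp_fst_iff ?_).2 ?_ <;> rw [Measure.fst_compProd]
  exacts [hf.aestronglyMeasurable, hf]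

lemma memLp_snd_compProd {g : α → ℝ} (hg : MemLp g 2 (π.bind η)) :
    MemLp (fun p => g p.2) 2 (π ⊗ₘ η) := by
  refine (memLp_snd_iff ?_).2 ?_ <;> rw [snd_compProd']
  exacts [hg.aestronglyMeasurable, hg]

lemma integral_mul_compProd {f g : α → ℝ} (hfm : Measurable f) (hgm : Measurable g)
    (hf : MemLp f 2 π) (hg : MemLp g 2 (π.bind η)) :
    ∫ p, f p.1 * g p.2 ∂(π ⊗ₘ η) = ∫ x, f x * ∫ y, g y ∂η x ∂π := by
  have hint : Integrable (fun p => f p.1 * g p.2) (π ⊗ₘ η) :=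
    integrable_mul2 (memLp_fst_compProd π η hf) (memLp_snd_compProd π η hg)
  rw [Measure.integral_compProd hint]
  refine integral_congr_ae (Eventually.of_forall fun x => ?_)
  exact integral_const_mul (f x) _

lemma integral_bind' {g : α → ℝ} (hgm : Measurable g) (hgi : Integrable g (π.bind η)) :
    ∫ y, g y ∂(π.bind η) = ∫ x, ∫ y, g y ∂η x ∂π := by
  rw [← snd_compProd' π η] at hgi ⊢
  rw [← integral_snd'' hgm.aestronglyMeasurable]
  rw [Measure.integral_compProd ((integrable_snd_iff hgm.aestronglyMeasurable).2 hgi)]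

end ProdInt


section MaxCorr
variable {α : Type*} [MeasurableSpace α] (μ : Measure (α × α)) [IsProbabilityMeasure μ]

lemma maxCorr_mem_le_one {r : ℝ}
    (hr : r ∈ {r : ℝ | ∃ f g : α → ℝ,
      Measurable f ∧ Measurable g ∧
      MemLp (fun p => f p.1) 2 μ ∧ MemLp (fun p => g p.2) 2 μ ∧
      (∫ p, f p.1 ∂μ) = 0 ∧ (∫ p, g p.2 ∂μ) = 0 ∧
      (∫ p, (f p.1) ^ 2 ∂μ) ≤ 1 ∧ (∫ p, (g p.2) ^ 2 ∂μ) ≤ 1 ∧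
      r = ∫ p, f p.1 * g p.2 ∂μ}) : r ≤ 1 := by
  obtain ⟨f, g, hfm, hgm, hf2, hg2, hf0, hg0, hf1, hg1, rfl⟩ := hr
  exact integral_mul_le_one μ hf2 hg2 hf1 hg1

lemma maxCorr_bddAbove :
    BddAbove {r : ℝ | ∃ f g : α → ℝ,
      Measurable f ∧ Measurable g ∧
      MemLp (fun p => f p.1) 2 μ ∧ MemLp (fun p => g p.2) 2 μ ∧
      (∫ p, f p.1 ∂μ) = 0 ∧ (∫ p, g p.2 ∂μ) = 0 ∧
      (∫ p, (f p.1) ^ 2 ∂μ) ≤ 1 ∧ (∫ p, (g p.2) ^ 2 ∂μ) ≤ 1 ∧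
      r = ∫ p, f p.1 * g p.2 ∂μ} :=
  ⟨1, fun _ hr => maxCorr_mem_le_one μ hr⟩

lemma maxCorr_nonneg : 0 ≤ maxCorrFS μ := by
  refine le_csSup (maxCorr_bddAbove μ) ?_
  refine ⟨fun _ => 0, fun _ => 0, measurable_const, measurable_const, ?_, ?_, ?_, ?_, ?_, ?_, ?_⟩
  · simpa using memLp_const (0 : ℝ)
  · simpa using memLp_const (0 : ℝ)
  all_goals simp

end MaxCorr

section Smoothing
variable {α : Type*} [MeasurableSpace α]

lemma measurable_kint (κ : Kernel α α) [IsMarkovKernel κ] {g : α → ℝ} (hgm : Measurable g) :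
    Measurable fun x => ∫ y, g y ∂κ x :=
  (StronglyMeasurable.integral_kernel_prod_right' (κ := κ)
    ((hgm.comp measurable_snd).stronglyMeasurable)).measurable

lemma kernel_smoothing (π : Measure α) [IsProbabilityMeasure π] (κ : Kernel α α)
    [IsMarkovKernel κ] (hinv : π.bind κ = π)
    {g : α → ℝ} (hgm : Measurable g) (hg : MemLp g 2 π) :
    MemLp (fun x => ∫ y, g y ∂κ x) 2 π ∧
    (∫ x, (∫ y, g y ∂κ x) ^ 2 ∂π ≤ ∫ y, g y ^ 2 ∂π) ∧
    (∫ x, ∫ y, g y ∂κ x ∂π = ∫ y, g y ∂π) := by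
  set h := fun x => ∫ y, g y ∂κ x with hh_def
  have hhm : Measurable h := measurable_kint κ hgm
  have hg' : MemLp g 2 (π.bind κ) := hinv.symm ▸ hg
  have hgsq : Integrable (fun p => g p.2 ^ 2) (π ⊗ₘ κ) :=
    (memLp_snd_compProd π κ hg').integrable_sq
  have hae_sq : ∀ᵐ x ∂π, Integrable (fun y => g y ^ 2) (κ x) :=
    ((Measure.integrable_compProd_iff hgsq.aestronglyMeasurable).1 hgsq).1
  have hGint : Integrable (fun x => ∫ y, g y ^ 2 ∂κ x) π := by
    have h2 := ((Measure.integrable_compProd_iff hgsq.aestronglyMeasurable).1 hgsq).2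
    refine h2.congr (Eventually.of_forall fun x => ?_)
    refine integral_congr_ae (Eventually.of_forall fun y => ?_)
    simp [abs_of_nonneg (sq_nonneg (g y))]
  have hjensen : ∀ᵐ x ∂π, h x ^ 2 ≤ ∫ y, g y ^ 2 ∂κ x := by
    filter_upwards [hae_sq] with x hx
    exact sq_integral_le (κ x) ((memLp_two_iff_integrable_sq hgm.aestronglyMeasurable).2 hx)
  have hh2int : Integrable (fun x => h x ^ 2) π := by
    refine hGint.mono' ((hhm.pow_const 2).aestronglyMeasurable) ?_
    filter_upwards [hjensen] with x hx
    rw [Real.norm_eq_abs, abs_of_nonneg (sq_nonneg _)]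
    exact hx
  have hhMem : MemLp h 2 π := (memLp_two_iff_integrable_sq hhm.aestronglyMeasurable).2 hh2int
  refine ⟨hhMem, ?_, ?_⟩
  · have hmono := integral_mono_ae hh2int hGint hjensen
    have heq : ∫ x, ∫ y, g y ^ 2 ∂κ x ∂π = ∫ y, g y ^ 2 ∂π := by
      rw [← integral_bind' π κ (hgm.pow_const 2) (hinv.symm ▸ hg.integrable_sq), hinv]
    linarith
  · rw [← integral_bind' π κ hgm (hinv.symm ▸ hg.integrable one_le_two), hinv]

end Smoothing

section Step
variable {α : Type*} [MeasurableSpace α]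

lemma step_identity (π : Measure α) [IsProbabilityMeasure π]
    (κ η : Kernel α α) [IsMarkovKernel κ] [IsMarkovKernel η]
    (hinv : π.bind κ = π) (hbn : π.bind η = π)
    {f g : α → ℝ} (hfm : Measurable f) (hgm : Measurable g)
    (hf : MemLp f 2 π) (hg : MemLp g 2 π) :
    ∫ p, f p.1 * g p.2 ∂(π ⊗ₘ (κ ∘ₖ η))
      = ∫ p, f p.1 * (∫ y, g y ∂κ p.2) ∂(π ⊗ₘ η) := by
  obtain ⟨hhMem, -, -⟩ := kernel_smoothing π κ hinv hgm hg
  have hhm : Measurable fun x => ∫ y, g y ∂κ x := measurable_kint κ hgm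
  have hbc : π.bind (κ ∘ₖ η) = π := Kernel.Invariant.comp hinv hbn
  rw [integral_mul_compProd π (κ ∘ₖ η) hfm hgm hf (hbc.symm ▸ hg),
    integral_mul_compProd π η hfm hhm hf (hbn.symm ▸ hhMem)]
  have hgint_ae : ∀ᵐ x ∂π, Integrable g ((κ ∘ₖ η) x) := by
    have hgi : Integrable (fun p => g p.2) (π ⊗ₘ (κ ∘ₖ η)) :=
      (memLp_snd_compProd π (κ ∘ₖ η) (hbc.symm ▸ hg)).integrable one_le_two
    exact ((Measure.integrable_compProd_iff hgi.aestronglyMeasurable).1 hgi).1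
  refine integral_congr_ae ?_
  filter_upwards [hgint_ae] with x hx
  congr 1
  rw [Kernel.comp_apply] at hx ⊢
  exact integral_bind' (η x) κ hgm hx

end Step

section Key
variable {α : Type*} [MeasurableSpace α]

lemma key_induction (π : Measure α) [IsProbabilityMeasure π] (κ : Kernel α α)
    [IsMarkovKernel κ] (hinv : π.bind κ = π)
    {f : α → ℝ} (hfm : Measurable f) (hf : MemLp f 2 π)
    (hf1 : ∫ x, f x ^ 2 ∂π ≤ 1) :
    ∀ n : ℕ, ∀ g : α → ℝ, Measurable g → MemLp g 2 π → (∫ x, g x ∂π) = 0 →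
      (∫ x, g x ^ 2 ∂π) ≤ 1 →
      ∫ p, f p.1 * g p.2 ∂(π ⊗ₘ kpow κ n) ≤ (maxCorrFS (π ⊗ₘ κ)) ^ n := by
  intro n
  induction n with
  | zero =>
    intro g hgm hg _ hg1
    rw [pow_zero]
    have hbid : π.bind (kpow κ 0) = π := bind_kpow π κ hinv 0
    rw [integral_mul_compProd π (kpow κ 0) hfm hgm hf (hbid.symm ▸ hg)]
    have hid : ∀ x, (∫ y, g y ∂(kpow κ 0) x) = g x := fun x => by
      rw [show kpow κ 0 = Kernel.id from rfl, Kernel.id_apply,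
        integral_dirac' _ _ hgm.stronglyMeasurable]
    simp_rw [hid]
    exact integral_mul_le_one π hf hg hf1 hg1
  | succ n ih =>
    intro g hgm hg hg0 hg1
    set h := fun x => ∫ y, g y ∂κ x with hh_def
    have hhm : Measurable h := measurable_kint κ hgm
    obtain ⟨hhMem, hhsq_le, hhmean⟩ := kernel_smoothing π κ hinv hgm hg
    have hbn : π.bind (kpow κ n) = π := bind_kpow π κ hinv n
    have hstep : ∫ p, f p.1 * g p.2 ∂(π ⊗ₘ kpow κ (n + 1))
        = ∫ p, f p.1 * h p.2 ∂(π ⊗ₘ kpow κ n) := by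
      rw [show kpow κ (n + 1) = κ ∘ₖ kpow κ n from rfl]
      exact step_identity π κ (kpow κ n) hinv hbn hfm hgm hf hg
    have hh2int : Integrable (fun x => h x ^ 2) π := hhMem.integrable_sq
    set I := ∫ x, h x ^ 2 ∂π with hI_def
    have hI0 : 0 ≤ I := integral_nonneg fun x => sq_nonneg _
    have hmean0 : ∫ x, h x ∂π = 0 := by rw [hhmean, hg0]
    rcases eq_or_lt_of_le hI0 with hIz | hIpos
    · -- degenerate case : h = 0 a.e.
      have hhz : ∀ᵐ x ∂π, h x = 0 := by
        have hz := (integral_eq_zero_iff_of_nonneg_ae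
          (Eventually.of_forall fun x => sq_nonneg (h x)) hh2int).1 hIz.symm
        filter_upwards [hz] with x hx
        exact pow_eq_zero_iff two_ne_zero |>.1 hx
      have hsnd : (π ⊗ₘ kpow κ n).snd = π := by rw [snd_compProd']; exact hbn
      have hz2 : ∀ᵐ p ∂(π ⊗ₘ kpow κ n), h p.2 = 0 := by
        rw [← hsnd] at hhz
        exact (ae_map_iff measurable_snd.aemeasurable
          (hhm (measurableSet_singleton (0 : ℝ)))).1 hhz
      rw [hstep]
      have hz3 : ∫ p, f p.1 * h p.2 ∂(π ⊗ₘ kpow κ n) = 0 := by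
        apply integral_eq_zero_of_ae
        filter_upwards [hz2] with p hp
        simp [hp]
      rw [hz3]
      exact pow_nonneg (maxCorr_nonneg _) _
    · set c := Real.sqrt I with hc_def
      have hc0 : 0 < c := Real.sqrt_pos.2 hIpos
      have hc2 : c ^ 2 = I := Real.sq_sqrt hI0
      set h' := fun x => c⁻¹ * h x with hh'_def
      have hh'm : Measurable h' := hhm.const_mul _
      have hh'Mem : MemLp h' 2 π := hhMem.const_mul _
      have hh'0 : ∫ x, h' x ∂π = 0 := by
        simp only [hh'_def, integral_const_mul, hmean0, mul_zero]
      have hh'sq : ∫ x, h' x ^ 2 ∂π = 1 := by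
        simp only [hh'_def, mul_pow, integral_const_mul, ← hI_def]
        rw [← hc2]
        field_simp
      have hc_le : c ≤ maxCorrFS (π ⊗ₘ κ) := by
        refine le_csSup (maxCorr_bddAbove _) ?_
        refine ⟨h', g, hh'm, hgm, memLp_fst_compProd π κ hh'Mem,
          memLp_snd_compProd π κ (hinv.symm ▸ hg), ?_, ?_, ?_, ?_, ?_⟩
        · rw [integral_fst'' (by rw [Measure.fst_compProd]; exact hh'm.aestronglyMeasurable),
            Measure.fst_compProd]
          exact hh'0
        · rw [integral_snd'' (by rw [snd_compProd', hinv]; exact hgm.aestronglyMeasurable),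
            snd_compProd', hinv]
          exact hg0
        · rw [integral_fst'' (μ := π ⊗ₘ κ) (φ := fun x => h' x ^ 2)
            (by rw [Measure.fst_compProd]; exact (hh'm.pow_const 2).aestronglyMeasurable),
            Measure.fst_compProd]
          exact hh'sq.le
        · rw [integral_snd'' (μ := π ⊗ₘ κ) (φ := fun x => g x ^ 2)
            (by rw [snd_compProd', hinv]; exact (hgm.pow_const 2).aestronglyMeasurable),
            snd_compProd', hinv]
          exact hg1
        · rw [integral_mul_compProd π κ hh'm hgm hh'Mem (hinv.symm ▸ hg)]
          have hval : ∀ x, h' x * h x = c⁻¹ * h x ^ 2 := fun x => by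
            simp only [hh'_def]; ring
          change c = ∫ x, h' x * h x ∂π
          simp_rw [hval, integral_const_mul, ← hI_def, ← hc2]
          field_simp
      have hIH := ih h' hh'm hh'Mem hh'0 hh'sq.le
      rw [hstep]
      have hrw : ∫ p, f p.1 * h p.2 ∂(π ⊗ₘ kpow κ n)
          = c * ∫ p, f p.1 * h' p.2 ∂(π ⊗ₘ kpow κ n) := by
        rw [← integral_const_mul]
        refine integral_congr_ae (Eventually.of_forall fun p => ?_)
        simp only [hh'_def]
        field_simp
      rw [hrw, pow_succ]
      have h1 : c * ∫ p, f p.1 * h' p.2 ∂(π ⊗ₘ kpow κ n)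
          ≤ c * (maxCorrFS (π ⊗ₘ κ)) ^ n := mul_le_mul_of_nonneg_left hIH hc0.le
      have h2 : c * (maxCorrFS (π ⊗ₘ κ)) ^ n
          ≤ (maxCorrFS (π ⊗ₘ κ)) ^ n * maxCorrFS (π ⊗ₘ κ) := by
        rw [mul_comm]
        exact mul_le_mul_of_nonneg_left hc_le (pow_nonneg (maxCorr_nonneg _) n)
      linarith

end Key


/-- For a stationary Markov chain with invariant law `π` and transition kernel `κ`, the
maximal correlation coefficients `ρₙ`, computed from the joint law `π ⊗ₘ κⁿ` of `(X₀, Xₙ)`,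
satisfy `ρₙ ≤ ρ₁ⁿ`. -/
theorem rho_n_le_rho_one_pow {α : Type*} [MeasurableSpace α]
    (π : Measure α) [IsProbabilityMeasure π] (κ : Kernel α α) [IsMarkovKernel κ]
    (hinv : π.bind κ = π) (n : ℕ) :
    maxCorrFS (π ⊗ₘ kpow κ n) ≤ (maxCorrFS (π ⊗ₘ κ)) ^ n := by
  refine Real.sSup_le ?_ (pow_nonneg (maxCorr_nonneg _) n)
  rintro r ⟨f, g, hfm, hgm, hf2, hg2, hf0, hg0, hf1, hg1, rfl⟩
  have hfst : (π ⊗ₘ kpow κ n).fst = π := Measure.fst_compProd π _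
  have hsnd : (π ⊗ₘ kpow κ n).snd = π := by
    rw [snd_compProd']; exact bind_kpow π κ hinv n
  have hfπ : MemLp f 2 π := by
    rw [← hfst]; exact (memLp_fst_iff (hfst ▸ hfm.aestronglyMeasurable)).1 hf2
  have hgπ : MemLp g 2 π := by
    rw [← hsnd]; exact (memLp_snd_iff (hsnd ▸ hgm.aestronglyMeasurable)).1 hg2
  have hg0' : ∫ x, g x ∂π = 0 := by
    rw [← hsnd, ← integral_snd'' (hsnd ▸ hgm.aestronglyMeasurable)]; exact hg0
  have hf1' : ∫ x, f x ^ 2 ∂π ≤ 1 := by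
    rw [← hfst, ← integral_fst'' (μ := π ⊗ₘ kpow κ n) (φ := fun x => f x ^ 2)
      (hfst ▸ (hfm.pow_const 2).aestronglyMeasurable)]
    exact hf1
  have hg1' : ∫ x, g x ^ 2 ∂π ≤ 1 := by
    rw [← hsnd, ← integral_snd'' (μ := π ⊗ₘ kpow κ n) (φ := fun x => g x ^ 2)
      (hsnd ▸ (hgm.pow_const 2).aestronglyMeasurable)]
    exact hg1
  exact key_induction π κ hinv hfm hfπ hf1' n g hgm hgπ hg0' hg1'
end

section
/- Let C be a 2-copula and suppose there is c > 0 such that the density of the absolutely continuous part of C satisfies c(x,y) ≥ c for a.e. (x,y) ∈ [0,1]². Then with ε = c/(1+c), for a.e. x ∈ [0,1] and every Borel set A ⊆ [0,1] with λ(A) ≤ ε, the transition kernel satisfies P(x,A) ≤ 1 - ε (Doeblin's condition). -/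
open MeasureTheory ProbabilityTheory Set Filter

/-- Doeblin condition: if the density of the absolutely continuous part of the copula is
bounded below by `c₀ > 0` a.e., then with `ε = c₀/(1+c₀)`, for a.e. `x` every Borel
`A ⊆ [0,1]` with `λ(A) ≤ ε` satisfies `P(x,A) ≤ 1 − ε`. -/
theorem density_bounded_below_doeblin (C : ℝ → ℝ → ℝ) (hC : IsCopula C)
    (κ : Kernel ℝ ℝ) [IsMarkovKernel κ] (hκ : IsCopulaKernel C κ)
    (hsupp : ∀ᵐ x ∂unif01, κ x (Icc (0:ℝ) 1) = 1)
    (c : ℝ → ℝ → ℝ) (hm : Measurable (Function.uncurry c))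
    (c₀ : ℝ) (hc₀ : 0 < c₀)
    (hlow : ∀ᵐ p ∂(unif01.prod unif01), c₀ ≤ c p.1 p.2)
    (hac : ∀ᵐ x ∂unif01, ∀ A : Set ℝ, MeasurableSet A →
      ENNReal.ofReal (∫ v in A, c x v ∂unif01) ≤ κ x A) :
    ∀ᵐ x ∂unif01, ∀ A : Set ℝ, MeasurableSet A → A ⊆ Icc (0:ℝ) 1 →
      (unif01 A).toReal ≤ c₀ / (1 + c₀) →
      (κ x A).toReal ≤ 1 - c₀ / (1 + c₀) := by
  have h1c : (0:ℝ) < 1 + c₀ := by linarith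
  set ε := c₀ / (1 + c₀) with hε
  have hε0 : 0 < ε := div_pos hc₀ h1c
  have hε1 : ε < 1 := by rw [hε, div_lt_one h1c]; linarith
  have hkey : c₀ * (1 - ε) = ε := by
    have h1e : 1 - c₀ / (1 + c₀) = 1 / (1 + c₀) := by
      rw [eq_div_iff h1c.ne', sub_mul, div_mul_cancel₀ _ h1c.ne']; ring
    rw [hε, h1e, mul_one_div]
  haveI : IsFiniteMeasure unif01 := by
    constructor
    rw [unif01]
    simp [Real.volume_Icc]
  have hfub := Measure.ae_ae_of_ae_prod hlow
  have hIcc : unif01 (Icc (0:ℝ) 1) = 1 := by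
    rw [unif01, Measure.restrict_apply measurableSet_Icc, inter_self, Real.volume_Icc]
    norm_num
  filter_upwards [hsupp, hac, hfub] with x hx1 hxac hxlow
  intro A hA hAsub hAle
  set B := Icc (0:ℝ) 1 \ A with hB
  have hBm : MeasurableSet B := measurableSet_Icc.diff hA
  have hcxm : Measurable fun v => c x v := hm.comp (measurable_const.prodMk measurable_id)
  have hAfin : unif01 A ≠ ⊤ := measure_ne_top _ _
  have hμB : ENNReal.ofReal (1 - ε) ≤ unif01 B := by
    rw [hB, measure_diff hAsub hA.nullMeasurableSet hAfin, hIcc]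
    have hAε : unif01 A ≤ ENNReal.ofReal ε := by
      rw [← ENNReal.ofReal_toReal hAfin]
      exact ENNReal.ofReal_le_ofReal hAle
    calc ENNReal.ofReal (1 - ε) = 1 - ENNReal.ofReal ε := by
          rw [ENNReal.ofReal_sub _ hε0.le, ENNReal.ofReal_one]
      _ ≤ 1 - unif01 A := tsub_le_tsub_left hAε 1
  have hκB : ENNReal.ofReal c₀ * unif01 B ≤ κ x B := by
    set Bn : ℕ → Set ℝ := fun n => B ∩ {v | c x v ≤ n} with hBn
    have hBnm : ∀ n, MeasurableSet (Bn n) := fun n =>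
      hBm.inter (measurableSet_le hcxm measurable_const)
    have hmono : Monotone Bn := by
      intro m n hmn v hv
      simp only [hBn, mem_inter_iff, mem_setOf_eq] at hv ⊢
      exact ⟨hv.1, le_trans hv.2 (Nat.cast_le.mpr hmn)⟩
    have hUnion : ⋃ n, Bn n = B := by
      ext v
      simp only [mem_iUnion, hBn, mem_inter_iff, mem_setOf_eq]
      constructor
      · rintro ⟨n, h, _⟩; exact h
      · intro h; exact ⟨⌈c x v⌉₊, h, Nat.le_ceil _⟩
    have hμUnion : unif01 B = ⨆ n, unif01 (Bn n) := by
      rw [← hUnion]; exact hmono.directed_le.measure_iUnion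
    rw [hμUnion, ENNReal.mul_iSup]
    refine iSup_le fun n => ?_
    have hint : IntegrableOn (fun v => c x v) (Bn n) unif01 := by
      apply Measure.integrableOn_of_bounded (measure_ne_top _ _) hcxm.aestronglyMeasurable
        (M := n)
      filter_upwards [ae_restrict_mem (hBnm n), ae_restrict_of_ae hxlow] with v hv hlv
      rw [Real.norm_eq_abs, abs_of_nonneg (le_trans hc₀.le hlv)]
      exact hv.2
    have hle : c₀ * (unif01 (Bn n)).toReal ≤ ∫ v in Bn n, c x v ∂unif01 := by
      calc c₀ * (unif01 (Bn n)).toReal = ∫ _ in Bn n, c₀ ∂unif01 := by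
            rw [setIntegral_const, smul_eq_mul, mul_comm]; rfl
        _ ≤ ∫ v in Bn n, c x v ∂unif01 :=
            setIntegral_mono_ae_restrict ((integrableOn_const_iff (C := c₀)).mpr (Or.inr (measure_lt_top _ _)))
              hint (ae_restrict_of_ae hxlow)
    calc ENNReal.ofReal c₀ * unif01 (Bn n)
        = ENNReal.ofReal (c₀ * (unif01 (Bn n)).toReal) := by
          rw [ENNReal.ofReal_mul hc₀.le, ENNReal.ofReal_toReal (measure_ne_top _ _)]
      _ ≤ ENNReal.ofReal (∫ v in Bn n, c x v ∂unif01) := ENNReal.ofReal_le_ofReal hle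
      _ ≤ κ x (Bn n) := hxac _ (hBnm n)
      _ ≤ κ x B := measure_mono inter_subset_left
  have hεB : ENNReal.ofReal ε ≤ κ x B := by
    calc ENNReal.ofReal ε = ENNReal.ofReal (c₀ * (1 - ε)) := by rw [hkey]
      _ = ENNReal.ofReal c₀ * ENNReal.ofReal (1 - ε) := ENNReal.ofReal_mul hc₀.le
      _ ≤ ENNReal.ofReal c₀ * unif01 B := mul_le_mul_right hμB _
      _ ≤ κ x B := hκB
  have hsum : κ x A + κ x B = 1 := by
    rw [← measure_union disjoint_sdiff_right hBm, union_diff_cancel hAsub, hx1]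
  have hAfinκ : κ x A ≠ ⊤ := measure_ne_top _ _
  have hBfinκ : κ x B ≠ ⊤ := measure_ne_top _ _
  have h1 : (κ x A).toReal + (κ x B).toReal = 1 := by
    rw [← ENNReal.toReal_add hAfinκ hBfinκ, hsum, ENNReal.toReal_one]
  have h2 : ε ≤ (κ x B).toReal := by
    have := ENNReal.toReal_mono hBfinκ hεB
    rwa [ENNReal.toReal_ofReal hε0.le] at this
  linarith
end
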